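/- Any proper graded Lie subalgebra b = ⊕_{i=-2}^2 b_i of the |2|-graded Lie algebra g = so(n+1,n) (n ≥ 3) has dimension at most 2n² - n + 1 = dim g - (2n - 1). -/

import Mathlib

open Matrix

attribute [local instance 100] LieRing.ofAssociativeRing

/-- Index type for `(n+1+n) × (n+1+n)` block matrices. -/
abbrev SOIdx (n : ℕ) := (Fin n) ⊕ ((Fin 1) ⊕ (Fin n))

noncomputable section

/-- Degree `0` block: `A` in the top left, `-Aᵀ` in the bottom right. -/
def mkA (n : ℕ) (A : Matrix (Fin n) (Fin n) ℝ) : Matrix (SOIdx n) (SOIdx n) ℝ :=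
  fun p q => match p, q with
  | .inl i, .inl j => A i j
  | .inr (.inr i), .inr (.inr j) => -(A j i)
  | _, _ => 0

/-- Degree `1` block: `v` as a column, `-vᵀ` as a row. -/
def mkv (n : ℕ) (v : Fin n → ℝ) : Matrix (SOIdx n) (SOIdx n) ℝ :=
  fun p q => match p, q with
  | .inl i, .inr (.inl _) => v i
  | .inr (.inl _), .inr (.inr j) => -(v j)
  | _, _ => 0

/-- Degree `-1` block: `w` as a row, `-wᵀ` as a column. -/
def mkw (n : ℕ) (w : Fin n → ℝ) : Matrix (SOIdx n) (SOIdx n) ℝ :=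
  fun p q => match p, q with
  | .inr (.inl _), .inl j => w j
  | .inr (.inr i), .inr (.inl _) => -(w i)
  | _, _ => 0

/-- Degree `2` block: skew matrix `B` in the top right corner. -/
def mkB (n : ℕ) (B : Matrix (Fin n) (Fin n) ℝ) : Matrix (SOIdx n) (SOIdx n) ℝ :=
  fun p q => match p, q with
  | .inl i, .inr (.inr j) => B i j
  | _, _ => 0

/-- Degree `-2` block: skew matrix `C` in the bottom left corner. -/
def mkC (n : ℕ) (C : Matrix (Fin n) (Fin n) ℝ) : Matrix (SOIdx n) (SOIdx n) ℝ :=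
  fun p q => match p, q with
  | .inr (.inr i), .inl j => C i j
  | _, _ => 0

/-- The grading components of `so(n+1,n)` in the block matrix realization. -/
def soPiece (n : ℕ) (d : ℤ) : Submodule ℝ (Matrix (SOIdx n) (SOIdx n) ℝ) :=
  if d = -2 then Submodule.span ℝ {M | ∃ C, Cᵀ = -C ∧ M = mkC n C}
  else if d = -1 then Submodule.span ℝ {M | ∃ w, M = mkw n w}
  else if d = 0 then Submodule.span ℝ {M | ∃ A, M = mkA n A}
  else if d = 1 then Submodule.span ℝ {M | ∃ v, M = mkv n v}
  else if d = 2 then Submodule.span ℝ {M | ∃ B, Bᵀ = -B ∧ M = mkB n B}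
  else ⊥


open Matrix
noncomputable section
variable {n : ℕ}
abbrev V (n : ℕ) := Fin n → ℝ

/-- dual vector representation -/
lemma dual_eq_dot (h : V n →ₗ[ℝ] ℝ) (x : V n) : h x = x ⬝ᵥ fun i => h (Pi.single i 1) := by
  have hs : ∀ i : Fin n, (Pi.single i 1 : V n) = fun j => if i = j then 1 else 0 := by
    intro i; funext j; simp [Pi.single_apply, eq_comm]
  conv_lhs => rw [pi_eq_sum_univ x]
  rw [map_sum]
  simp only [_root_.map_smul, smul_eq_mul, dotProduct, hs]

def perp (S : Submodule ℝ (V n)) : Submodule ℝ (V n) where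
  carrier := {x | ∀ u ∈ S, u ⬝ᵥ x = 0}
  add_mem' := by intro a b ha hb u hu; rw [dotProduct_add, ha u hu, hb u hu]; ring
  zero_mem' := by intro u hu; simp
  smul_mem' := by intro c a ha u hu; rw [dotProduct_smul, ha u hu]; simp

lemma mem_perp {S : Submodule ℝ (V n)} {x : V n} : x ∈ perp S ↔ ∀ u ∈ S, u ⬝ᵥ x = 0 := Iff.rfl

lemma perp_antitone {S T : Submodule ℝ (V n)} (h : S ≤ T) : perp T ≤ perp S :=
  fun _ hx u hu => hx u (h hu)

def dotL (S : Submodule ℝ (V n)) : V n →ₗ[ℝ] (↥S →ₗ[ℝ] ℝ) where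
  toFun x := { toFun := fun s => (s : V n) ⬝ᵥ x
               map_add' := by intros; rw [← add_dotProduct]; rfl
               map_smul' := by intros; rw [← smul_dotProduct]; rfl }
  map_add' := by intros; ext s; simp [dotProduct_add]
  map_smul' := by intros; ext s; simp [dotProduct_smul]

lemma ker_dotL (S : Submodule ℝ (V n)) : LinearMap.ker (dotL S) = perp S := by
  ext x
  constructor
  · intro hx u hu
    have := congrFun (congrArg (fun f => f.toFun) hx) ⟨u, hu⟩
    simpa [dotL] using this
  · intro hx
    ext s
    exact hx s s.2

lemma finrank_perp_add (S : Submodule ℝ (V n)) :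
    Module.finrank ℝ (perp S) + Module.finrank ℝ S = n := by
  have hsurj : Function.Surjective (dotL S) := by
    intro g
    obtain ⟨p, hp⟩ := Submodule.exists_isCompl S
    let pr := S.projectionOnto p hp
    refine ⟨fun i => g (pr (Pi.single i 1)), ?_⟩
    ext s
    show (s : V n) ⬝ᵥ _ = g s
    have : (g.comp pr) (s : V n) = g s := by
      simp [pr, Submodule.projectionOnto_apply_left hp s]
    rw [← this, dual_eq_dot (g.comp pr)]
    rfl
  have h1 := LinearMap.finrank_range_add_finrank_ker (dotL S)
  rw [ker_dotL, LinearMap.range_eq_top.mpr hsurj] at h1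
  have h2 : Module.finrank ℝ (↥(⊤ : Submodule ℝ (↥S →ₗ[ℝ] ℝ))) = Module.finrank ℝ S := by
    rw [finrank_top, Module.finrank_linearMap, Module.finrank_self, mul_one]
  rw [h2] at h1
  have h3 : Module.finrank ℝ (V n) = n := by simp
  omega

lemma disjoint_perp (S : Submodule ℝ (V n)) : S ⊓ perp S = ⊥ := by
  ext x
  simp only [Submodule.mem_inf, Submodule.mem_bot]
  constructor
  · rintro ⟨h1, h2⟩
    have := h2 x h1
    exact (dotProduct_self_eq_zero).mp this
  · rintro rfl; simp [mem_perp]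

lemma isCompl_perp (S : Submodule ℝ (V n)) : IsCompl S (perp S) := by
  have hd : Disjoint S (perp S) := disjoint_iff.mpr (disjoint_perp S)
  refine ⟨hd, codisjoint_iff.mpr ?_⟩
  have h1 := Submodule.finrank_sup_add_finrank_inf_eq S (perp S)
  rw [disjoint_perp S] at h1
  apply Submodule.eq_top_of_finrank_eq
  have h3 : Module.finrank ℝ (V n) = n := by simp
  have h4 := finrank_perp_add S
  have h5 : Module.finrank ℝ (↥(⊥ : Submodule ℝ (V n))) = 0 := finrank_bot ℝ (V n)
  omega

/-- matrix of a bilinear form -/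
def bilMat (f : V n →ₗ[ℝ] V n →ₗ[ℝ] ℝ) : Matrix (Fin n) (Fin n) ℝ :=
  Matrix.of fun p q => f (Pi.single p 1) (Pi.single q 1)

lemma dot_bilMat (f : V n →ₗ[ℝ] V n →ₗ[ℝ] ℝ) (x u : V n) :
    x ⬝ᵥ (bilMat f *ᵥ u) = f x u := by
  have h1 : f x u = u ⬝ᵥ fun q => f x (Pi.single q 1) := dual_eq_dot (f x) u
  have h2 : ∀ q, f x (Pi.single q 1) = x ⬝ᵥ fun p => f (Pi.single p 1) (Pi.single q 1) := by
    intro q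
    exact dual_eq_dot (f.flip (Pi.single q 1)) x
  rw [h1]
  simp only [h2]
  simp only [dotProduct, Matrix.mulVec, Finset.mul_sum, Finset.sum_mul, bilMat,
    Matrix.of_apply]
  rw [Finset.sum_comm]
  refine Finset.sum_congr rfl fun p _ => Finset.sum_congr rfl fun q _ => by ring

lemma dot_transpose (M : Matrix (Fin n) (Fin n) ℝ) (x u : V n) :
    x ⬝ᵥ (Mᵀ *ᵥ u) = u ⬝ᵥ (M *ᵥ x) := by
  rw [Matrix.mulVec_transpose, Matrix.dotProduct_mulVec u M x, dotProduct_comm]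

/-- matrices mapping U into W -/
def homSM (U W : Submodule ℝ (V n)) : Submodule ℝ (Matrix (Fin n) (Fin n) ℝ) where
  carrier := {A | ∀ u ∈ U, A *ᵥ u ∈ W}
  add_mem' := by intro a b ha hb u hu; rw [Matrix.add_mulVec]; exact W.add_mem (ha u hu) (hb u hu)
  zero_mem' := by intro u hu; rw [Matrix.zero_mulVec]; exact W.zero_mem
  smul_mem' := by intro c a ha u hu; rw [Matrix.smul_mulVec]; exact W.smul_mem c (ha u hu)

lemma mem_homSM {U W : Submodule ℝ (V n)} {A : Matrix (Fin n) (Fin n) ℝ} :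
    A ∈ homSM U W ↔ ∀ u ∈ U, A *ᵥ u ∈ W := Iff.rfl

/-- The key evaluation map -/
def psiL (X I : Submodule ℝ (V n)) :
    Matrix (Fin n) (Fin n) ℝ →ₗ[ℝ] (↥X →ₗ[ℝ] ↥I →ₗ[ℝ] ℝ) where
  toFun M :=
    { toFun := fun x =>
        { toFun := fun u => (x : V n) ⬝ᵥ (M *ᵥ (u : V n))
          map_add' := by intros; simp [Matrix.mulVec_add, dotProduct_add]
          map_smul' := by intros; simp [Matrix.mulVec_smul, dotProduct_smul] }
      map_add' := by intros; ext u; simp [add_dotProduct]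
      map_smul' := by intros; ext u; simp [smul_dotProduct] }
  map_add' := by intros; ext x u; simp [Matrix.add_mulVec, dotProduct_add]
  map_smul' := by intros; ext x u; simp [Matrix.smul_mulVec, dotProduct_smul]

lemma psiL_apply (X I : Submodule ℝ (V n)) (M : Matrix (Fin n) (Fin n) ℝ) (x : ↥X) (u : ↥I) :
    psiL X I M x u = (x : V n) ⬝ᵥ (M *ᵥ (u : V n)) := rfl

def skewSM (m : ℕ) : Submodule ℝ (Matrix (Fin m) (Fin m) ℝ) where
  carrier := {B | Bᵀ = -B}
  add_mem' := by intro a b ha hb; simp only [Set.mem_setOf_eq] at *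
                 rw [Matrix.transpose_add, ha, hb]; abel
  zero_mem' := by simp
  smul_mem' := by intro c a ha; simp only [Set.mem_setOf_eq] at *
                  rw [Matrix.transpose_smul, ha]; simp

lemma mem_skewSM {m : ℕ} {B : Matrix (Fin m) (Fin m) ℝ} : B ∈ skewSM m ↔ Bᵀ = -B := Iff.rfl

lemma skew_apply {m : ℕ} {B : Matrix (Fin m) (Fin m) ℝ} (hB : B ∈ skewSM m) (i j : Fin m) :
    B j i = - B i j := by
  have := congrFun (congrFun hB i) j
  simpa using this

def ltPairsEquiv (m : ℕ) : {p : Fin m × Fin m // p.1 < p.2} ≃ (Σ j : Fin m, Fin j.val) where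
  toFun p := ⟨p.1.2, ⟨p.1.1.val, p.2⟩⟩
  invFun s := ⟨(⟨s.2.val, s.2.isLt.trans s.1.isLt⟩, s.1), by
    simpa [Fin.lt_def] using s.2.isLt⟩
  left_inv p := by
    rcases p with ⟨⟨a, b⟩, h⟩; rfl
  right_inv s := by
    rcases s with ⟨b, c⟩; rfl

lemma card_ltPairs (m : ℕ) :
    Fintype.card {p : Fin m × Fin m // p.1 < p.2} = ∑ i ∈ Finset.range m, i := by
  rw [Fintype.card_congr (ltPairsEquiv m)]
  rw [Fintype.card_sigma]
  simp only [Fintype.card_fin]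
  exact Fin.sum_univ_eq_sum_range (fun i => i) m

lemma finrank_skewSM_le (m : ℕ) :
    Module.finrank ℝ (skewSM m) ≤ ∑ i ∈ Finset.range m, i := by
  classical
  let F : ↥(skewSM m) →ₗ[ℝ] ({p : Fin m × Fin m // p.1 < p.2} → ℝ) :=
    { toFun := fun B p => (B : Matrix (Fin m) (Fin m) ℝ) p.1.1 p.1.2
      map_add' := by intros; rfl
      map_smul' := by intros; rfl }
  have hinj : Function.Injective F := by
    intro B B' h
    ext i j
    rcases lt_trichotomy i j with hij | rfl | hij
    · exact congrFun h ⟨(i, j), hij⟩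
    · have h1 := skew_apply B.2 i i
      have h2 := skew_apply B'.2 i i
      show (B : Matrix (Fin m) (Fin m) ℝ) i i = (B' : Matrix (Fin m) (Fin m) ℝ) i i
      linarith
    · have h1 := skew_apply B.2 j i
      have h2 := skew_apply B'.2 j i
      have h3 := congrFun h ⟨(j, i), hij⟩
      show (B : Matrix (Fin m) (Fin m) ℝ) i j = (B' : Matrix (Fin m) (Fin m) ℝ) i j
      rw [h1, h2]
      exact congrArg Neg.neg h3
  calc Module.finrank ℝ (skewSM m) ≤ Module.finrank ℝ ({p : Fin m × Fin m // p.1 < p.2} → ℝ) :=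
        LinearMap.finrank_le_finrank_of_injective hinj
    _ = _ := by rw [Module.finrank_fintype_fun_eq_card, card_ltPairs]




lemma lie_A_v (A : Matrix (Fin n) (Fin n) ℝ) (v : Fin n → ℝ) :
    ⁅mkA n A, mkv n v⁆ = mkv n (A *ᵥ v) := by
  funext p q
  rw [Ring.lie_def]
  rcases p with i | i | i <;> rcases q with j | j | j <;>
    simp [Matrix.sub_apply, Matrix.mul_apply, mkA, mkv, Fintype.sum_sum_type,
      Matrix.mulVec, dotProduct, mul_comm]

lemma lie_B_w (B : Matrix (Fin n) (Fin n) ℝ) (hB : Bᵀ = -B) (w : Fin n → ℝ) :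
    ⁅mkB n B, mkw n w⁆ = mkv n (-(B *ᵥ w)) := by
  have hB' : ∀ i j, B i j = - B j i := fun i j => by
    have := congrFun (congrFun hB j) i; simpa using this
  funext p q
  rw [Ring.lie_def]
  rcases p with i | i | i <;> rcases q with j | j | j <;>
    simp [Matrix.sub_apply, Matrix.mul_apply, mkB, mkw, mkv, Fintype.sum_sum_type,
      Matrix.mulVec, dotProduct]
  rw [← Finset.sum_neg_distrib]
  refine Finset.sum_congr rfl fun x _ => ?_
  rw [hB' x j]; ring

lemma lie_C_v (C : Matrix (Fin n) (Fin n) ℝ) (hC : Cᵀ = -C) (v : Fin n → ℝ) :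
    ⁅mkC n C, mkv n v⁆ = mkw n (-(C *ᵥ v)) := by
  have hC' : ∀ i j, C i j = - C j i := fun i j => by
    have := congrFun (congrFun hC j) i; simpa using this
  funext p q
  rw [Ring.lie_def]
  rcases p with i | i | i <;> rcases q with j | j | j <;>
    simp [Matrix.sub_apply, Matrix.mul_apply, mkC, mkv, mkw, Fintype.sum_sum_type,
      Matrix.mulVec, dotProduct]
  rw [← Finset.sum_neg_distrib]
  refine Finset.sum_congr rfl fun x _ => ?_
  rw [hC' x j]; ring



lemma lie_A_w (A : Matrix (Fin n) (Fin n) ℝ) (w : Fin n → ℝ) :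
    ⁅mkA n A, mkw n w⁆ = mkw n (-(Aᵀ *ᵥ w)) := by
  funext p q
  rw [Ring.lie_def]
  rcases p with i | i | i <;> rcases q with j | j | j <;>
    simp [Matrix.sub_apply, Matrix.mul_apply, mkA, mkw, Fintype.sum_sum_type,
      Matrix.mulVec, dotProduct, Matrix.transpose_apply, mul_comm]

lemma lie_v_w (v w : Fin n → ℝ) :
    ⁅mkv n v, mkw n w⁆ = mkA n (vecMulVec v w) := by
  funext p q
  rw [Ring.lie_def]
  rcases p with i | i | i <;> rcases q with j | j | j <;>
    simp [Matrix.sub_apply, Matrix.mul_apply, mkA, mkw, mkv, Fintype.sum_sum_type,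
      Matrix.vecMulVec_apply, mul_comm]

lemma lie_v_v (v u : Fin n → ℝ) :
    ⁅mkv n v, mkv n u⁆ = mkB n (vecMulVec u v - vecMulVec v u) := by
  funext p q
  rw [Ring.lie_def]
  rcases p with i | i | i <;> rcases q with j | j | j <;>
    simp [Matrix.sub_apply, Matrix.mul_apply, mkB, mkv, Fintype.sum_sum_type,
      Matrix.vecMulVec_apply, mul_comm] <;> ring

lemma lie_w_w (v u : Fin n → ℝ) :
    ⁅mkw n v, mkw n u⁆ = mkC n (vecMulVec u v - vecMulVec v u) := by
  funext p q
  rw [Ring.lie_def]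
  rcases p with i | i | i <;> rcases q with j | j | j <;>
    simp [Matrix.sub_apply, Matrix.mul_apply, mkC, mkw, Fintype.sum_sum_type,
      Matrix.vecMulVec_apply, mul_comm] <;> ring


lemma finrank_homSM_le (U W : Submodule ℝ (V n)) :
    Module.finrank ℝ ↥(homSM U W) + Module.finrank ℝ ↥(perp W) * Module.finrank ℝ ↥U ≤ n * n := by
  set X := perp W with hX
  set ψ := psiL X U with hψ
  have hle : homSM U W ≤ LinearMap.ker ψ := by
    intro A hA
    rw [LinearMap.mem_ker]
    ext x u
    show (x : V n) ⬝ᵥ (A *ᵥ (u : V n)) = 0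
    rw [dotProduct_comm]
    exact x.2 _ (hA _ u.2)
  have hsurj : Function.Surjective ψ := by
    intro γ
    set pX := X.projectionOnto (perp X) (isCompl_perp X) with hpX
    set pU := U.projectionOnto (perp U) (isCompl_perp U) with hpU
    refine ⟨bilMat
      { toFun := fun v => (γ (pX v)).comp pU
        map_add' := by intro a c; simp [map_add, LinearMap.add_comp]
        map_smul' := by intro r a; simp [_root_.map_smul, LinearMap.smul_comp] }, ?_⟩
    ext x u
    rw [psiL_apply, dot_bilMat]
    show γ (pX (x : V n)) (pU (u : V n)) = γ x u
    rw [Submodule.projectionOnto_apply_left, Submodule.projectionOnto_apply_left]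
  have h1 := LinearMap.finrank_range_add_finrank_ker (V₂ := ↥X →ₗ[ℝ] ↥U →ₗ[ℝ] ℝ) ψ
  rw [LinearMap.range_eq_top.mpr hsurj] at h1
  have h2 : Module.finrank ℝ (↥(⊤ : Submodule ℝ (↥X →ₗ[ℝ] ↥U →ₗ[ℝ] ℝ)))
      = Module.finrank ℝ ↥X * Module.finrank ℝ ↥U := by
    rw [finrank_top, Module.finrank_linearMap, Module.finrank_linearMap, Module.finrank_self,
      mul_one]
  have h3 : Module.finrank ℝ (Matrix (Fin n) (Fin n) ℝ) = n * n := by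
    rw [Module.finrank_matrix]
    simp
  have h4 := Submodule.finrank_mono hle
  omega

lemma finrank_skew_homSM_le (U W : Submodule ℝ (V n)) :
    Module.finrank ℝ ↥(skewSM n ⊓ homSM U W)
      + Module.finrank ℝ ↥(perp W) * Module.finrank ℝ ↥(U ⊓ W)
      ≤ Module.finrank ℝ ↥(skewSM n) := by
  set X := perp W with hX
  set I := U ⊓ W with hI
  set ψ := (psiL X I).comp (skewSM n).subtype with hψ
  have hsurj : Function.Surjective ψ := by
    intro γ
    set pX := X.projectionOnto (perp X) (isCompl_perp X) with hpX
    set pI := I.projectionOnto (perp I) (isCompl_perp I) with hpI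
    set f : V n →ₗ[ℝ] V n →ₗ[ℝ] ℝ :=
      { toFun := fun v => (γ (pX v)).comp pI
        map_add' := by intro a c; simp [map_add, LinearMap.add_comp]
        map_smul' := by intro r a; simp [_root_.map_smul, LinearMap.smul_comp] } with hf
    have hskew : bilMat f - (bilMat f)ᵀ ∈ skewSM n := by
      rw [mem_skewSM, Matrix.transpose_sub, Matrix.transpose_transpose]
      abel
    refine ⟨⟨bilMat f - (bilMat f)ᵀ, hskew⟩, ?_⟩
    ext x u
    show (x : V n) ⬝ᵥ ((bilMat f - (bilMat f)ᵀ) *ᵥ (u : V n)) = γ x u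
    rw [Matrix.sub_mulVec, dotProduct_sub, dot_bilMat, dot_transpose, dot_bilMat]
    show γ (pX (x : V n)) (pI (u : V n)) - γ (pX (u : V n)) (pI (x : V n)) = γ x u
    have hx0 : pI (x : V n) = 0 := by
      have hxI : (x : V n) ∈ perp I := perp_antitone inf_le_right x.2
      exact Submodule.projectionOnto_apply_right (isCompl_perp I) ⟨(x : V n), hxI⟩
    rw [hx0, Submodule.projectionOnto_apply_left, Submodule.projectionOnto_apply_left]
    simp
  have hle : skewSM n ⊓ homSM U W ≤ Submodule.map (skewSM n).subtype (LinearMap.ker ψ) := by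
    intro B hB
    refine ⟨⟨B, hB.1⟩, ?_, rfl⟩
    simp only [SetLike.mem_coe, LinearMap.mem_ker]
    ext x u
    show (x : V n) ⬝ᵥ (B *ᵥ (u : V n)) = 0
    rw [dotProduct_comm]
    exact x.2 _ (hB.2 _ (Submodule.mem_inf.mp u.2).1)
  have h1 := LinearMap.finrank_range_add_finrank_ker (V₂ := ↥X →ₗ[ℝ] ↥I →ₗ[ℝ] ℝ) ψ
  rw [LinearMap.range_eq_top.mpr hsurj] at h1
  have h2 : Module.finrank ℝ (↥(⊤ : Submodule ℝ (↥X →ₗ[ℝ] ↥I →ₗ[ℝ] ℝ)))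
      = Module.finrank ℝ ↥X * Module.finrank ℝ ↥I := by
    rw [finrank_top, Module.finrank_linearMap, Module.finrank_linearMap, Module.finrank_self,
      mul_one]
  have h4 : Module.finrank ℝ ↥(skewSM n ⊓ homSM U W) ≤ Module.finrank ℝ ↥(LinearMap.ker ψ) :=
    le_trans (Submodule.finrank_mono hle) (Submodule.finrank_map_le _ _)
  omega

lemma finrank_skew_kill_le (U : Submodule ℝ (V n)) :
    Module.finrank ℝ ↥(skewSM n ⊓ homSM U ⊥)
      ≤ ∑ i ∈ Finset.range (n - Module.finrank ℝ ↥U), i := by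
  classical
  set Y := perp U with hY
  have hYrank : Module.finrank ℝ ↥Y + Module.finrank ℝ ↥U = n := finrank_perp_add U
  set y : Module.Basis (Fin (Module.finrank ℝ ↥Y)) ℝ ↥Y := Module.finBasis ℝ ↥Y with hy
  set K := skewSM n ⊓ homSM U ⊥ with hK
  have hBu : ∀ (B : ↥K) (u : V n), u ∈ U → (B : Matrix (Fin n) (Fin n) ℝ) *ᵥ u = 0 := by
    intro B u hu
    have := B.2.2 u hu
    simpa using this
  have hBskew : ∀ (B : ↥K), (B : Matrix (Fin n) (Fin n) ℝ)ᵀ = -(B : Matrix (Fin n) (Fin n) ℝ) :=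
    fun B => B.2.1
  let J : ↥K →ₗ[ℝ] ↥(skewSM (Module.finrank ℝ ↥Y)) :=
    { toFun := fun B => ⟨Matrix.of fun i j =>
        ((y i : V n) ⬝ᵥ ((B : Matrix (Fin n) (Fin n) ℝ) *ᵥ (y j : V n))), by
          rw [mem_skewSM]
          ext i j
          show ((y j : V n) ⬝ᵥ ((B : Matrix (Fin n) (Fin n) ℝ) *ᵥ (y i : V n)))
            = -(((y i : V n) ⬝ᵥ ((B : Matrix (Fin n) (Fin n) ℝ) *ᵥ (y j : V n))))
          rw [← dot_transpose, hBskew B, Matrix.neg_mulVec, dotProduct_neg]⟩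
      map_add' := by
        intro a c; apply Subtype.ext; ext i j
        simp [Matrix.add_mulVec, dotProduct_add]
      map_smul' := by
        intro r a; apply Subtype.ext; ext i j
        simp [Matrix.smul_mulVec, dotProduct_smul] }
  have hinj : Function.Injective J := by
    intro B B' hBB
    have hzero : ∀ i j : Fin (Module.finrank ℝ ↥Y),
        (y i : V n) ⬝ᵥ (((B : Matrix (Fin n) (Fin n) ℝ) - (B' : Matrix (Fin n) (Fin n) ℝ))
          *ᵥ (y j : V n)) = 0 := by
      intro i j
      have := congrFun (congrFun (congrArg Subtype.val hBB) i) j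
      rw [Matrix.sub_mulVec, dotProduct_sub]
      simpa [J] using sub_eq_zero_of_eq this
    set D := (B : Matrix (Fin n) (Fin n) ℝ) - (B' : Matrix (Fin n) (Fin n) ℝ) with hD
    have hDskew : Dᵀ = -D := by
      rw [hD, Matrix.transpose_sub, hBskew B, hBskew B']
      abel
    have hDu : ∀ u ∈ U, D *ᵥ u = 0 := by
      intro u hu
      rw [hD, Matrix.sub_mulVec, hBu B u hu, hBu B' u hu]
      abel
    have hyy : ∀ s t : ↥Y, (s : V n) ⬝ᵥ (D *ᵥ (t : V n)) = 0 := by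
      have hψ : psiL Y Y D = 0 := by
        apply y.ext
        intro i
        apply y.ext
        intro j
        exact hzero i j
      intro s t
      have := congrFun (congrArg DFunLike.coe (congrFun (congrArg DFunLike.coe hψ) s)) t
      simpa [psiL_apply] using this
    have hall : ∀ v w : V n, w ⬝ᵥ (D *ᵥ v) = 0 := by
      intro v w
      obtain ⟨uv, yv, huv, -⟩ := Submodule.existsUnique_add_of_isCompl (isCompl_perp U) v
      obtain ⟨uw, yw, huw, -⟩ := Submodule.existsUnique_add_of_isCompl (isCompl_perp U) w
      rw [← huv, ← huw]
      rw [Matrix.mulVec_add, dotProduct_add, hDu _ uv.2, dotProduct_zero,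
        zero_add, add_dotProduct]
      have h2 : (yw : V n) ⬝ᵥ (D *ᵥ (yv : V n)) = 0 := hyy yw yv
      have h1 : (uw : V n) ⬝ᵥ (D *ᵥ (yv : V n)) = 0 := by
        have hcalc : (uw : V n) ⬝ᵥ (D *ᵥ (yv : V n))
            = -((yv : V n) ⬝ᵥ (D *ᵥ (uw : V n))) := by
          have := dot_transpose D (yv : V n) (uw : V n)
          rw [hDskew, Matrix.neg_mulVec, dotProduct_neg] at this
          linarith
        rw [hcalc, hDu _ uw.2, dotProduct_zero, neg_zero]
      rw [h1, h2, add_zero]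
    have hD0 : D = 0 := by
      ext i j
      have := hall (Pi.single j 1) (Pi.single i 1)
      simpa [dotProduct, Matrix.mulVec, Pi.single_apply, Finset.sum_ite_eq,
        Finset.sum_ite_eq'] using this
    apply Subtype.ext
    exact sub_eq_zero.mp hD0
  calc Module.finrank ℝ ↥K ≤ Module.finrank ℝ ↥(skewSM (Module.finrank ℝ ↥Y)) :=
        LinearMap.finrank_le_finrank_of_injective hinj
    _ ≤ ∑ i ∈ Finset.range (Module.finrank ℝ ↥Y), i := finrank_skewSM_le (Module.finrank ℝ ↥Y)
    _ = ∑ i ∈ Finset.range (n - Module.finrank ℝ ↥U), i := by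
        rw [Nat.eq_sub_of_add_eq hYrank]



lemma finrank_sup_le {M : Type*} [AddCommGroup M] [Module ℝ M] [FiniteDimensional ℝ M]
    (s t : Submodule ℝ M) :
    Module.finrank ℝ ↥(s ⊔ t) ≤ Module.finrank ℝ ↥s + Module.finrank ℝ ↥t := by
  have := Submodule.finrank_sup_add_finrank_inf_eq s t
  omega

lemma finrank_inf_lb (U W : Submodule ℝ (V n)) :
    Module.finrank ℝ ↥U + Module.finrank ℝ ↥W ≤ n + Module.finrank ℝ ↥(U ⊓ W) := by
  have h1 := Submodule.finrank_sup_add_finrank_inf_eq U W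
  have h2 : Module.finrank ℝ ↥(U ⊔ W) ≤ n := by
    have := Submodule.finrank_le (U ⊔ W)
    simpa using this
  omega

lemma single_vecMulVec_eq (i j : Fin n) :
    vecMulVec (Pi.single i 1 : V n) (Pi.single j 1) = Matrix.single i j (1:ℝ) := by
  ext a b
  simp [Matrix.vecMulVec_apply, Matrix.single, Pi.single_apply, eq_comm]
  aesop

lemma mem_span_vecMulVec (A : Matrix (Fin n) (Fin n) ℝ) :
    A ∈ Submodule.span ℝ {M : Matrix (Fin n) (Fin n) ℝ | ∃ v w, M = vecMulVec v w} := by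
  have hA : A = ∑ i : Fin n, ∑ j : Fin n,
      (A i j) • vecMulVec (Pi.single i 1 : V n) (Pi.single j 1) := by
    simp only [single_vecMulVec_eq]
    conv_lhs => rw [Matrix.matrix_eq_sum_single A]
    refine Finset.sum_congr rfl fun i _ => Finset.sum_congr rfl fun j _ => ?_
    rw [Matrix.smul_single, smul_eq_mul, mul_one]
  rw [hA]
  exact Submodule.sum_mem _ fun i _ => Submodule.sum_mem _ fun j _ =>
    Submodule.smul_mem _ _ (Submodule.subset_span ⟨_, _, rfl⟩)

lemma skew_mem_span_pairs {B : Matrix (Fin n) (Fin n) ℝ} (hB : Bᵀ = -B) :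
    B ∈ Submodule.span ℝ
      {M : Matrix (Fin n) (Fin n) ℝ | ∃ v w, M = vecMulVec v w - vecMulVec w v} := by
  have hB' : ∀ a b, B b a = -B a b := fun a b => by
    have := congrFun (congrFun hB a) b
    simpa using this
  have key : B = (2⁻¹ : ℝ) • ∑ i : Fin n, ∑ j : Fin n,
      (B i j) • (vecMulVec (Pi.single i 1 : V n) (Pi.single j 1)
        - vecMulVec (Pi.single j 1 : V n) (Pi.single i 1)) := by
    have h1 : ∑ i : Fin n, ∑ j : Fin n,
        (B i j) • (vecMulVec (Pi.single i 1 : V n) (Pi.single j 1)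
          - vecMulVec (Pi.single j 1 : V n) (Pi.single i 1))
        = (∑ i : Fin n, ∑ j : Fin n, (B i j) • vecMulVec (Pi.single i 1 : V n) (Pi.single j 1))
          - ∑ i : Fin n, ∑ j : Fin n, (B i j) • vecMulVec (Pi.single j 1 : V n) (Pi.single i 1) := by
      rw [← Finset.sum_sub_distrib]
      refine Finset.sum_congr rfl fun i _ => ?_
      rw [← Finset.sum_sub_distrib]
      refine Finset.sum_congr rfl fun j _ => ?_
      rw [smul_sub]
    have h2 : (∑ i : Fin n, ∑ j : Fin n,
        (B i j) • vecMulVec (Pi.single i 1 : V n) (Pi.single j 1)) = B := by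
      simp only [single_vecMulVec_eq]
      conv_rhs => rw [Matrix.matrix_eq_sum_single B]
      refine Finset.sum_congr rfl fun i _ => Finset.sum_congr rfl fun j _ => ?_
      rw [Matrix.smul_single, smul_eq_mul, mul_one]
    have h3 : (∑ i : Fin n, ∑ j : Fin n,
        (B i j) • vecMulVec (Pi.single j 1 : V n) (Pi.single i 1)) = -B := by
      rw [Finset.sum_comm]
      have : ∀ j i, (B i j) • vecMulVec (Pi.single j 1 : V n) (Pi.single i 1)
          = (-B j i) • vecMulVec (Pi.single j 1 : V n) (Pi.single i 1) := by
        intro j i; rw [hB' j i]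
      calc ∑ j : Fin n, ∑ i : Fin n, (B i j) • vecMulVec (Pi.single j 1 : V n) (Pi.single i 1)
          = ∑ j : Fin n, ∑ i : Fin n, (-B j i) • vecMulVec (Pi.single j 1 : V n) (Pi.single i 1) := by
            exact Finset.sum_congr rfl fun j _ => Finset.sum_congr rfl fun i _ => this j i
        _ = -B := by
            simp only [neg_smul, Finset.sum_neg_distrib]
            rw [h2]
    rw [h1, h2, h3]
    ext a b
    simp
    ring
  rw [key]
  refine Submodule.smul_mem _ _ (Submodule.sum_mem _ fun i _ => Submodule.sum_mem _ fun j _ =>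
    Submodule.smul_mem _ _ (Submodule.subset_span ⟨_, _, rfl⟩))


def mkAL (n : ℕ) : Matrix (Fin n) (Fin n) ℝ →ₗ[ℝ] Matrix (SOIdx n) (SOIdx n) ℝ where
  toFun := mkA n
  map_add' := by
    intro x y; funext p q
    rcases p with i | i | i <;> rcases q with j | j | j <;> simp [mkA, Matrix.add_apply] <;> ring
  map_smul' := by
    intro c x; funext p q
    rcases p with i | i | i <;> rcases q with j | j | j <;> simp [mkA, Matrix.smul_apply, mul_comm]

def mkvL (n : ℕ) : (Fin n → ℝ) →ₗ[ℝ] Matrix (SOIdx n) (SOIdx n) ℝ where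
  toFun := mkv n
  map_add' := by
    intro x y; funext p q
    rcases p with i | i | i <;> rcases q with j | j | j <;> simp [mkv, Matrix.add_apply] <;> ring
  map_smul' := by
    intro c x; funext p q
    rcases p with i | i | i <;> rcases q with j | j | j <;> simp [mkv, Matrix.smul_apply, mul_comm]

def mkwL (n : ℕ) : (Fin n → ℝ) →ₗ[ℝ] Matrix (SOIdx n) (SOIdx n) ℝ where
  toFun := mkw n
  map_add' := by
    intro x y; funext p q
    rcases p with i | i | i <;> rcases q with j | j | j <;> simp [mkw, Matrix.add_apply] <;> ring
  map_smul' := by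
    intro c x; funext p q
    rcases p with i | i | i <;> rcases q with j | j | j <;> simp [mkw, Matrix.smul_apply, mul_comm]

def mkBL (n : ℕ) : Matrix (Fin n) (Fin n) ℝ →ₗ[ℝ] Matrix (SOIdx n) (SOIdx n) ℝ where
  toFun := mkB n
  map_add' := by
    intro x y; funext p q
    rcases p with i | i | i <;> rcases q with j | j | j <;> simp [mkB, Matrix.add_apply] <;> ring
  map_smul' := by
    intro c x; funext p q
    rcases p with i | i | i <;> rcases q with j | j | j <;> simp [mkB, Matrix.smul_apply, mul_comm]

def mkCL (n : ℕ) : Matrix (Fin n) (Fin n) ℝ →ₗ[ℝ] Matrix (SOIdx n) (SOIdx n) ℝ where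
  toFun := mkC n
  map_add' := by
    intro x y; funext p q
    rcases p with i | i | i <;> rcases q with j | j | j <;> simp [mkC, Matrix.add_apply] <;> ring
  map_smul' := by
    intro c x; funext p q
    rcases p with i | i | i <;> rcases q with j | j | j <;> simp [mkC, Matrix.smul_apply, mul_comm]

@[simp] lemma mkAL_apply (n : ℕ) (A : Matrix (Fin n) (Fin n) ℝ) : mkAL n A = mkA n A := rfl
@[simp] lemma mkvL_apply (n : ℕ) (v : Fin n → ℝ) : mkvL n v = mkv n v := rfl
@[simp] lemma mkwL_apply (n : ℕ) (w : Fin n → ℝ) : mkwL n w = mkw n w := rfl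
@[simp] lemma mkBL_apply (n : ℕ) (B : Matrix (Fin n) (Fin n) ℝ) : mkBL n B = mkB n B := rfl
@[simp] lemma mkCL_apply (n : ℕ) (C : Matrix (Fin n) (Fin n) ℝ) : mkCL n C = mkC n C := rfl

lemma soPiece_zero (n : ℕ) : soPiece n 0 = LinearMap.range (mkAL n) := by
  have h : soPiece n 0 = Submodule.span ℝ {M | ∃ A, M = mkA n A} := by norm_num [soPiece]
  rw [h]
  apply le_antisymm
  · rw [Submodule.span_le]; rintro M ⟨A, rfl⟩; exact ⟨A, rfl⟩
  · rintro M ⟨A, rfl⟩; exact Submodule.subset_span ⟨A, rfl⟩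

lemma soPiece_one (n : ℕ) : soPiece n 1 = LinearMap.range (mkvL n) := by
  have h : soPiece n 1 = Submodule.span ℝ {M | ∃ v, M = mkv n v} := by norm_num [soPiece]
  rw [h]
  apply le_antisymm
  · rw [Submodule.span_le]; rintro M ⟨v, rfl⟩; exact ⟨v, rfl⟩
  · rintro M ⟨v, rfl⟩; exact Submodule.subset_span ⟨v, rfl⟩

lemma soPiece_negone (n : ℕ) : soPiece n (-1) = LinearMap.range (mkwL n) := by
  have h : soPiece n (-1) = Submodule.span ℝ {M | ∃ w, M = mkw n w} := by norm_num [soPiece]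
  rw [h]
  apply le_antisymm
  · rw [Submodule.span_le]; rintro M ⟨w, rfl⟩; exact ⟨w, rfl⟩
  · rintro M ⟨w, rfl⟩; exact Submodule.subset_span ⟨w, rfl⟩

lemma soPiece_two (n : ℕ) : soPiece n 2 = Submodule.map (mkBL n) (skewSM n) := by
  have h : soPiece n 2 = Submodule.span ℝ {M | ∃ B, Bᵀ = -B ∧ M = mkB n B} := by
    norm_num [soPiece]
  rw [h]
  apply le_antisymm
  · rw [Submodule.span_le]; rintro M ⟨B, hB, rfl⟩; exact ⟨B, hB, rfl⟩
  · rintro M ⟨B, hB, rfl⟩; exact Submodule.subset_span ⟨B, hB, rfl⟩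

lemma soPiece_negtwo (n : ℕ) : soPiece n (-2) = Submodule.map (mkCL n) (skewSM n) := by
  have h : soPiece n (-2) = Submodule.span ℝ {M | ∃ C, Cᵀ = -C ∧ M = mkC n C} := by
    norm_num [soPiece]
  rw [h]
  apply le_antisymm
  · rw [Submodule.span_le]; rintro M ⟨C, hC, rfl⟩; exact ⟨C, hC, rfl⟩
  · rintro M ⟨C, hC, rfl⟩; exact Submodule.subset_span ⟨C, hC, rfl⟩

lemma soPiece_bot (n : ℕ) (d : ℤ) (h2 : d ≠ -2) (h1 : d ≠ -1) (h0 : d ≠ 0) (h1' : d ≠ 1)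
    (h2' : d ≠ 2) : soPiece n d = ⊥ := by
  rw [soPiece, if_neg h2, if_neg h1, if_neg h0, if_neg h1', if_neg h2']

lemma gauss2 (m : ℕ) : (∑ i ∈ Finset.range m, i) * 2 + m = m * m := by
  induction m with
  | zero => rfl
  | succ t ih =>
      rw [Finset.sum_range_succ]
      nlinarith [ih]

lemma finrank_sup5_le {M : Type*} [AddCommGroup M] [Module ℝ M] [FiniteDimensional ℝ M]
    (p1 p2 p3 p4 p5 : Submodule ℝ M) :
    Module.finrank ℝ ↥(p1 ⊔ (p2 ⊔ (p3 ⊔ (p4 ⊔ p5))))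
      ≤ Module.finrank ℝ ↥p1 + Module.finrank ℝ ↥p2 + Module.finrank ℝ ↥p3
        + Module.finrank ℝ ↥p4 + Module.finrank ℝ ↥p5 := by
  have h1 := finrank_sup_le p1 (p2 ⊔ (p3 ⊔ (p4 ⊔ p5)))
  have h2 := finrank_sup_le p2 (p3 ⊔ (p4 ⊔ p5))
  have h3 := finrank_sup_le p3 (p4 ⊔ p5)
  have h4 := finrank_sup_le p4 p5
  omega


lemma arith_k0 (n k l bb dA dS dT SK SKb : ℕ) (hn : 3 ≤ n) (hk : k = 0)
    (hbl : bb + l = n) (hF1 : dA + bb * l ≤ n * n) (hdS : dS ≤ SKb)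
    (hSKb : SKb * 2 + bb = bb * bb) (hdT : dT ≤ SK) (hSK : SK * 2 + n = n * n) :
    dT + l + dA + k + dS + n ≤ 2 * n ^ 2 + 1 := by
  subst hk
  zify at *
  nlinarith [sq_nonneg ((l : ℤ) - 1), sq_nonneg ((bb : ℤ) - l),
    mul_nonneg (by linarith : (0:ℤ) ≤ (l:ℤ)) (by linarith : (0:ℤ) ≤ (n:ℤ) - 3),
    mul_nonneg (by linarith : (0:ℤ) ≤ (l:ℤ)) (by linarith : (0:ℤ) ≤ (bb:ℤ))]

lemma arith_l0 (n k l a dA dS dT SK SKa : ℕ) (hn : 3 ≤ n) (hl : l = 0)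
    (hak : a + k = n) (hF1 : dA + a * k ≤ n * n) (hdT : dT ≤ SKa)
    (hSKa : SKa * 2 + a = a * a) (hdS : dS ≤ SK) (hSK : SK * 2 + n = n * n) :
    dT + l + dA + k + dS + n ≤ 2 * n ^ 2 + 1 := by
  subst hl
  zify at *
  nlinarith [sq_nonneg ((k : ℤ) - 1), sq_nonneg ((a : ℤ) - k),
    mul_nonneg (by linarith : (0:ℤ) ≤ (k:ℤ)) (by linarith : (0:ℤ) ≤ (n:ℤ) - 3),
    mul_nonneg (by linarith : (0:ℤ) ≤ (k:ℤ)) (by linarith : (0:ℤ) ≤ (a:ℤ))]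

lemma arith_kn (n k l bbp i dA dS dT SK : ℕ) (hn : 3 ≤ n)
    (hk : k = n) (hl1 : 1 ≤ l) (hln : l < n) (hb : bbp + l = n)
    (hF1 : dA + bbp * l ≤ n * n) (hF2 : dT + bbp * i ≤ SK) (hil : l ≤ i)
    (hdS : dS ≤ SK) (hSK : SK * 2 + n = n * n) :
    dT + l + dA + k + dS + n ≤ 2 * n ^ 2 + 1 := by
  zify at *
  nlinarith [mul_nonneg (by linarith : (0:ℤ) ≤ (bbp:ℤ)) (by linarith : (0:ℤ) ≤ (i:ℤ) - l),
    mul_nonneg (by linarith : (0:ℤ) ≤ (l:ℤ) - 1) (by linarith : (0:ℤ) ≤ (bbp:ℤ) - 1),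
    mul_nonneg (by linarith : (0:ℤ) ≤ (l:ℤ)) (by linarith : (0:ℤ) ≤ (bbp:ℤ) - 1)]

lemma arith_E1 (n k l a dA dS dT SK : ℕ) (hn : 3 ≤ n)
    (hk1 : 1 ≤ k) (hkn : k < n) (hl1 : 1 ≤ l) (hkl : k + l ≤ n) (ha : a + k = n)
    (hF1 : dA + a * k ≤ n * n) (hdS : dS ≤ SK) (hdT : dT ≤ SK) (hSK : SK * 2 + n = n * n) :
    dT + l + dA + k + dS + n ≤ 2 * n ^ 2 + 1 := by
  zify at *
  nlinarith [mul_nonneg (by linarith : (0:ℤ) ≤ (k:ℤ) - 1) (by linarith : (0:ℤ) ≤ (a:ℤ) - 1)]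

lemma arith_E2 (n k l a bb i dA dS dT SK : ℕ) (hn : 3 ≤ n)
    (hk1 : 1 ≤ k) (hkn : k < n) (hl1 : 1 ≤ l) (hln : l ≤ n) (hkl : n ≤ k + l)
    (ha : a + k = n) (hb : bb + l = n) (hi : k + l ≤ n + i)
    (hF1 : dA + a * k ≤ n * n) (hF2 : dS + a * i ≤ SK) (hF2' : dT + bb * i ≤ SK)
    (hSK : SK * 2 + n = n * n) :
    dT + l + dA + k + dS + n ≤ 2 * n ^ 2 + 1 := by
  zify at *
  nlinarith [mul_nonneg (by linarith : (0:ℤ) ≤ (k:ℤ) - 1) (by linarith : (0:ℤ) ≤ (a:ℤ) - 1),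
    mul_nonneg (by linarith : (0:ℤ) ≤ (a:ℤ) + bb - 1) (by linarith : (0:ℤ) ≤ (n:ℤ) - a - bb),
    mul_nonneg (by linarith : (0:ℤ) ≤ (a:ℤ) + bb) (by linarith : (0:ℤ) ≤ (i:ℤ) - (k + l - n))]

/-- Any proper graded Lie subalgebra `b = ⊕_{i=-2}^2 b_i` of the `|2|`-graded Lie
algebra `so(n+1,n)` (`n ≥ 3`) has dimension at most `2n² - n + 1 = dim g - (2n - 1)`. -/
theorem stmt6 (n : ℕ) (hn : 3 ≤ n)
    (b : LieSubalgebra ℝ (Matrix (SOIdx n) (SOIdx n) ℝ))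
    (hsub : b.toSubmodule ≤ ⨆ d : ℤ, soPiece n d)
    (hgraded : b.toSubmodule = ⨆ d : ℤ, (b.toSubmodule ⊓ soPiece n d))
    (hproper : b.toSubmodule ≠ ⨆ d : ℤ, soPiece n d) :
    Module.finrank ℝ b.toSubmodule ≤ 2 * n ^ 2 - n + 1 := by
  classical
  set Z : Submodule ℝ (Matrix (SOIdx n) (SOIdx n) ℝ) := b.toSubmodule with hZdef
  have lieZ : ∀ {x y : Matrix (SOIdx n) (SOIdx n) ℝ}, x ∈ Z → y ∈ Z → ⁅x, y⁆ ∈ Z := by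
    intro x y hx hy
    exact b.lie_mem hx hy
  set Ac := Submodule.comap (mkAL n) Z with hAcdef
  set Wc := Submodule.comap (mkvL n) Z with hWcdef
  set Uc := Submodule.comap (mkwL n) Z with hUcdef
  set Sc := skewSM n ⊓ Submodule.comap (mkBL n) Z with hScdef
  set Tc := skewSM n ⊓ Submodule.comap (mkCL n) Z with hTcdef
  -- bracket relations
  have R1 : ∀ {A : Matrix (Fin n) (Fin n) ℝ} {v : Fin n → ℝ},
      A ∈ Ac → v ∈ Wc → A *ᵥ v ∈ Wc := by
    intro A v hA hv
    have h := lieZ (Submodule.mem_comap.mp hA) (Submodule.mem_comap.mp hv)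
    rw [mkAL_apply, mkvL_apply, lie_A_v] at h
    exact Submodule.mem_comap.mpr h
  have R2 : ∀ {A : Matrix (Fin n) (Fin n) ℝ} {w : Fin n → ℝ},
      A ∈ Ac → w ∈ Uc → Aᵀ *ᵥ w ∈ Uc := by
    intro A w hA hw
    have h := lieZ (Submodule.mem_comap.mp hA) (Submodule.mem_comap.mp hw)
    rw [mkAL_apply, mkwL_apply, lie_A_w] at h
    have h2 : -(Aᵀ *ᵥ w) ∈ Uc := Submodule.mem_comap.mpr (by rw [mkwL_apply]; exact h)
    simpa using Uc.neg_mem h2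
  have R3 : ∀ {B : Matrix (Fin n) (Fin n) ℝ} {w : Fin n → ℝ},
      B ∈ Sc → w ∈ Uc → B *ᵥ w ∈ Wc := by
    intro B w hB hw
    obtain ⟨hBs, hBZ⟩ := Submodule.mem_inf.mp hB
    have h := lieZ (Submodule.mem_comap.mp hBZ) (Submodule.mem_comap.mp hw)
    rw [mkBL_apply, mkwL_apply, lie_B_w B hBs w] at h
    have h2 : -(B *ᵥ w) ∈ Wc := Submodule.mem_comap.mpr (by rw [mkvL_apply]; exact h)
    simpa using Wc.neg_mem h2
  have R4 : ∀ {C : Matrix (Fin n) (Fin n) ℝ} {v : Fin n → ℝ},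
      C ∈ Tc → v ∈ Wc → C *ᵥ v ∈ Uc := by
    intro C v hC hv
    obtain ⟨hCs, hCZ⟩ := Submodule.mem_inf.mp hC
    have h := lieZ (Submodule.mem_comap.mp hCZ) (Submodule.mem_comap.mp hv)
    rw [mkCL_apply, mkvL_apply, lie_C_v C hCs v] at h
    have h2 : -(C *ᵥ v) ∈ Uc := Submodule.mem_comap.mpr (by rw [mkwL_apply]; exact h)
    simpa using Uc.neg_mem h2
  -- decompose the finrank of Z
  have hZ5 : Z ≤ (Z ⊓ soPiece n (-2)) ⊔ ((Z ⊓ soPiece n (-1)) ⊔ ((Z ⊓ soPiece n 0) ⊔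
      ((Z ⊓ soPiece n 1) ⊔ (Z ⊓ soPiece n 2)))) := by
    conv_lhs => rw [hgraded]
    refine iSup_le fun d => ?_
    by_cases e2 : d = -2
    · subst e2; exact le_sup_left
    by_cases e1 : d = -1
    · subst e1; exact le_sup_of_le_right le_sup_left
    by_cases e0 : d = 0
    · subst e0; exact le_sup_of_le_right (le_sup_of_le_right le_sup_left)
    by_cases ep1 : d = 1
    · subst ep1
      exact le_sup_of_le_right (le_sup_of_le_right (le_sup_of_le_right le_sup_left))
    by_cases ep2 : d = 2
    · subst ep2
      exact le_sup_of_le_right (le_sup_of_le_right (le_sup_of_le_right le_sup_right))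
    · rw [soPiece_bot n d e2 e1 e0 ep1 ep2, inf_bot_eq]
      exact bot_le
  have hfrZ : Module.finrank ℝ ↥Z ≤ Module.finrank ℝ ↥(Z ⊓ soPiece n (-2))
      + Module.finrank ℝ ↥(Z ⊓ soPiece n (-1)) + Module.finrank ℝ ↥(Z ⊓ soPiece n 0)
      + Module.finrank ℝ ↥(Z ⊓ soPiece n 1) + Module.finrank ℝ ↥(Z ⊓ soPiece n 2) :=
    le_trans (Submodule.finrank_mono hZ5) (finrank_sup5_le _ _ _ _ _)
  -- piece bounds
  have hpm2 : Module.finrank ℝ ↥(Z ⊓ soPiece n (-2)) ≤ Module.finrank ℝ ↥Tc := by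
    rw [soPiece_negtwo]
    have hle : Z ⊓ Submodule.map (mkCL n) (skewSM n) ≤ Submodule.map (mkCL n) Tc := by
      rintro x ⟨hxZ, C, hCs, rfl⟩
      exact ⟨C, Submodule.mem_inf.mpr ⟨hCs, Submodule.mem_comap.mpr hxZ⟩, rfl⟩
    exact le_trans (Submodule.finrank_mono hle) (Submodule.finrank_map_le _ _)
  have hp2 : Module.finrank ℝ ↥(Z ⊓ soPiece n 2) ≤ Module.finrank ℝ ↥Sc := by
    rw [soPiece_two]
    have hle : Z ⊓ Submodule.map (mkBL n) (skewSM n) ≤ Submodule.map (mkBL n) Sc := by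
      rintro x ⟨hxZ, B, hBs, rfl⟩
      exact ⟨B, Submodule.mem_inf.mpr ⟨hBs, Submodule.mem_comap.mpr hxZ⟩, rfl⟩
    exact le_trans (Submodule.finrank_mono hle) (Submodule.finrank_map_le _ _)
  have hpm1 : Module.finrank ℝ ↥(Z ⊓ soPiece n (-1)) ≤ Module.finrank ℝ ↥Uc := by
    rw [soPiece_negone]
    have heq : Submodule.map (mkwL n) Uc = Z ⊓ LinearMap.range (mkwL n) := by
      rw [hUcdef, Submodule.map_comap_eq, inf_comm]
    rw [← heq]
    exact Submodule.finrank_map_le _ _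
  have hp1 : Module.finrank ℝ ↥(Z ⊓ soPiece n 1) ≤ Module.finrank ℝ ↥Wc := by
    rw [soPiece_one]
    have heq : Submodule.map (mkvL n) Wc = Z ⊓ LinearMap.range (mkvL n) := by
      rw [hWcdef, Submodule.map_comap_eq, inf_comm]
    rw [← heq]
    exact Submodule.finrank_map_le _ _
  have hp0 : Module.finrank ℝ ↥(Z ⊓ soPiece n 0) ≤ Module.finrank ℝ ↥Ac := by
    rw [soPiece_zero]
    have heq : Submodule.map (mkAL n) Ac = Z ⊓ LinearMap.range (mkAL n) := by
      rw [hAcdef, Submodule.map_comap_eq, inf_comm]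
    rw [← heq]
    exact Submodule.finrank_map_le _ _
  -- abbreviations for dimensions
  -- full case
  by_cases hfull : Module.finrank ℝ ↥Wc = n ∧ Module.finrank ℝ ↥Uc = n
  · exfalso
    have hfrV : Module.finrank ℝ (Fin n → ℝ) = n := by
      simp [Module.finrank_fintype_fun_eq_card]
    have hWtop : Wc = ⊤ := Submodule.eq_top_of_finrank_eq (by rw [hfull.1, hfrV])
    have hUtop : Uc = ⊤ := Submodule.eq_top_of_finrank_eq (by rw [hfull.2, hfrV])
    have hv : ∀ v : Fin n → ℝ, mkv n v ∈ Z := by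
      intro v
      have : v ∈ Wc := hWtop ▸ Submodule.mem_top
      exact Submodule.mem_comap.mp this
    have hw : ∀ w : Fin n → ℝ, mkw n w ∈ Z := by
      intro w
      have : w ∈ Uc := hUtop ▸ Submodule.mem_top
      exact Submodule.mem_comap.mp this
    have hAm : ∀ A : Matrix (Fin n) (Fin n) ℝ, mkA n A ∈ Z := by
      intro A
      have hsp : Submodule.span ℝ {M : Matrix (Fin n) (Fin n) ℝ | ∃ v w, M = vecMulVec v w}
          ≤ Ac := by
        rw [Submodule.span_le]
        rintro M ⟨v, w, rfl⟩
        have h := lieZ (hv v) (hw w)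
        rw [lie_v_w] at h
        exact Submodule.mem_comap.mpr h
      exact Submodule.mem_comap.mp (hsp (mem_span_vecMulVec A))
    have hBm : ∀ B : Matrix (Fin n) (Fin n) ℝ, Bᵀ = -B → mkB n B ∈ Z := by
      intro B hB
      have hsp : Submodule.span ℝ
          {M : Matrix (Fin n) (Fin n) ℝ | ∃ v w, M = vecMulVec v w - vecMulVec w v}
          ≤ Submodule.comap (mkBL n) Z := by
        rw [Submodule.span_le]
        rintro M ⟨v, w, rfl⟩
        have h := lieZ (hv w) (hv v)
        rw [lie_v_v] at h
        exact Submodule.mem_comap.mpr h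
      exact Submodule.mem_comap.mp (hsp (skew_mem_span_pairs hB))
    have hCm : ∀ C : Matrix (Fin n) (Fin n) ℝ, Cᵀ = -C → mkC n C ∈ Z := by
      intro C hC
      have hsp : Submodule.span ℝ
          {M : Matrix (Fin n) (Fin n) ℝ | ∃ v w, M = vecMulVec v w - vecMulVec w v}
          ≤ Submodule.comap (mkCL n) Z := by
        rw [Submodule.span_le]
        rintro M ⟨v, w, rfl⟩
        have h := lieZ (hw w) (hw v)
        rw [lie_w_w] at h
        exact Submodule.mem_comap.mpr h
      exact Submodule.mem_comap.mp (hsp (skew_mem_span_pairs hC))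
    have htop : (⨆ d : ℤ, soPiece n d) ≤ Z := by
      refine iSup_le fun d => ?_
      by_cases e2 : d = -2
      · subst e2; rw [soPiece_negtwo]; rintro x ⟨C, hC, rfl⟩; exact hCm C hC
      by_cases e1 : d = -1
      · subst e1; rw [soPiece_negone]; rintro x ⟨w, rfl⟩; exact hw w
      by_cases e0 : d = 0
      · subst e0; rw [soPiece_zero]; rintro x ⟨A, rfl⟩; exact hAm A
      by_cases ep1 : d = 1
      · subst ep1; rw [soPiece_one]; rintro x ⟨v, rfl⟩; exact hv v
      by_cases ep2 : d = 2
      · subst ep2; rw [soPiece_two]; rintro x ⟨B, hB, rfl⟩; exact hBm B hB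
      · rw [soPiece_bot n d e2 e1 e0 ep1 ep2]; exact bot_le
    exact hproper (le_antisymm hsub htop)
  · -- dimension counting
    have hfrV : Module.finrank ℝ (Fin n → ℝ) = n := by
      simp
    have e6 : Module.finrank ℝ ↥Wc ≤ n := le_trans (Submodule.finrank_le Wc) (le_of_eq hfrV)
    have e7 : Module.finrank ℝ ↥Uc ≤ n := le_trans (Submodule.finrank_le Uc) (le_of_eq hfrV)
    have e1 : Module.finrank ℝ ↥(perp Wc) + Module.finrank ℝ ↥Wc = n := finrank_perp_add Wc
    have e2 : Module.finrank ℝ ↥(perp Uc) + Module.finrank ℝ ↥Uc = n := finrank_perp_add Uc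
    have e3 : Module.finrank ℝ ↥Uc + Module.finrank ℝ ↥Wc
        ≤ n + Module.finrank ℝ ↥(Uc ⊓ Wc) := finrank_inf_lb Uc Wc
    have e5 : Module.finrank ℝ ↥(Uc ⊓ Wc) ≤ Module.finrank ℝ ↥Uc :=
      Submodule.finrank_mono inf_le_left
    have eSK := finrank_skewSM_le n
    have eG := gauss2 n
    have hAhom : Ac ≤ homSM Wc Wc := fun A hA => fun w hw => R1 hA hw
    have F1 : Module.finrank ℝ ↥Ac + Module.finrank ℝ ↥(perp Wc) * Module.finrank ℝ ↥Wc
        ≤ n * n :=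
      le_trans (Nat.add_le_add_right (Submodule.finrank_mono hAhom) _) (finrank_homSM_le Wc Wc)
    have hAT : Module.finrank ℝ ↥Ac ≤ Module.finrank ℝ ↥(homSM Uc Uc) := by
      let φ : ↥Ac →ₗ[ℝ] ↥(homSM Uc Uc) :=
        { toFun := fun A => ⟨(A : Matrix (Fin n) (Fin n) ℝ)ᵀ, fun u hu => R2 A.2 hu⟩
          map_add' := by intro x y; apply Subtype.ext; simp [Matrix.transpose_add]
          map_smul' := by intro c x; apply Subtype.ext; simp [Matrix.transpose_smul] }
      have hinj : Function.Injective φ := by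
        intro A A' h
        apply Subtype.ext
        have h2 := congrArg Subtype.val h
        have h3 : (A : Matrix (Fin n) (Fin n) ℝ)ᵀ = (A' : Matrix (Fin n) (Fin n) ℝ)ᵀ := h2
        simpa [Matrix.transpose_inj] using h3
      exact LinearMap.finrank_le_finrank_of_injective hinj
    have F1' : Module.finrank ℝ ↥Ac + Module.finrank ℝ ↥(perp Uc) * Module.finrank ℝ ↥Uc
        ≤ n * n :=
      le_trans (Nat.add_le_add_right hAT _) (finrank_homSM_le Uc Uc)
    have hShom : Sc ≤ skewSM n ⊓ homSM Uc Wc := fun B hB =>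
      Submodule.mem_inf.mpr ⟨(Submodule.mem_inf.mp hB).1, fun u hu => R3 hB hu⟩
    have F2 : Module.finrank ℝ ↥Sc
        + Module.finrank ℝ ↥(perp Wc) * Module.finrank ℝ ↥(Uc ⊓ Wc)
        ≤ Module.finrank ℝ ↥(skewSM n) :=
      le_trans (Nat.add_le_add_right (Submodule.finrank_mono hShom) _) (finrank_skew_homSM_le Uc Wc)
    have hThom : Tc ≤ skewSM n ⊓ homSM Wc Uc := fun C hC =>
      Submodule.mem_inf.mpr ⟨(Submodule.mem_inf.mp hC).1, fun v hv => R4 hC hv⟩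
    have F2'0 : Module.finrank ℝ ↥Tc
        + Module.finrank ℝ ↥(perp Uc) * Module.finrank ℝ ↥(Wc ⊓ Uc)
        ≤ Module.finrank ℝ ↥(skewSM n) :=
      le_trans (Nat.add_le_add_right (Submodule.finrank_mono hThom) _) (finrank_skew_homSM_le Wc Uc)
    have F2' : Module.finrank ℝ ↥Tc
        + Module.finrank ℝ ↥(perp Uc) * Module.finrank ℝ ↥(Uc ⊓ Wc)
        ≤ Module.finrank ℝ ↥(skewSM n) := by
      rwa [inf_comm Wc Uc] at F2'0
    have hdSSK : Module.finrank ℝ ↥Sc ≤ Module.finrank ℝ ↥(skewSM n) :=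
      Submodule.finrank_mono inf_le_left
    have hdTSK : Module.finrank ℝ ↥Tc ≤ Module.finrank ℝ ↥(skewSM n) :=
      Submodule.finrank_mono inf_le_left
    suffices key : Module.finrank ℝ ↥Tc + Module.finrank ℝ ↥Uc + Module.finrank ℝ ↥Ac
        + Module.finrank ℝ ↥Wc + Module.finrank ℝ ↥Sc + n ≤ 2 * n ^ 2 + 1 by
      have hZle := le_trans hfrZ
        (add_le_add (add_le_add (add_le_add (add_le_add hpm2 hpm1) hp0) hp1) hp2)
      have hn2 : n ≤ 2 * n ^ 2 := by clear * - hn; nlinarith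
      have hgoal : Module.finrank ℝ ↥Z + n ≤ 2 * n ^ 2 + 1 :=
        le_trans (Nat.add_le_add_right hZle n) key
      rw [← Nat.sub_add_comm hn2]
      exact Nat.le_sub_of_add_le hgoal
    by_cases hk0 : Module.finrank ℝ ↥Wc = 0
    · have hWbot : Wc = ⊥ := Submodule.finrank_eq_zero.mp hk0
      have hkill : Sc ≤ skewSM n ⊓ homSM Uc ⊥ := fun B hB =>
        Submodule.mem_inf.mpr ⟨(Submodule.mem_inf.mp hB).1, fun u hu => by
          have h := R3 hB hu; rwa [hWbot] at h⟩
      have hdS : Module.finrank ℝ ↥Sc ≤ ∑ i ∈ Finset.range (n - Module.finrank ℝ ↥Uc), i :=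
        le_trans (Submodule.finrank_mono hkill) (finrank_skew_kill_le Uc)
      have hGb := gauss2 (n - Module.finrank ℝ ↥Uc)
      have hbl : (n - Module.finrank ℝ ↥Uc) + Module.finrank ℝ ↥Uc = n := by omega
      have hbb : Module.finrank ℝ ↥(perp Uc) = n - Module.finrank ℝ ↥Uc := by omega
      rw [hbb] at F1'
      exact arith_k0 n (Module.finrank ℝ ↥Wc) (Module.finrank ℝ ↥Uc)
        (n - Module.finrank ℝ ↥Uc) (Module.finrank ℝ ↥Ac) (Module.finrank ℝ ↥Sc)
        (Module.finrank ℝ ↥Tc) (∑ i ∈ Finset.range n, i)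
        (∑ i ∈ Finset.range (n - Module.finrank ℝ ↥Uc), i) hn hk0 hbl F1' hdS hGb
        (le_trans hdTSK eSK) eG
    by_cases hl0 : Module.finrank ℝ ↥Uc = 0
    · have hUbot : Uc = ⊥ := Submodule.finrank_eq_zero.mp hl0
      have hkill : Tc ≤ skewSM n ⊓ homSM Wc ⊥ := fun C hC =>
        Submodule.mem_inf.mpr ⟨(Submodule.mem_inf.mp hC).1, fun v hv => by
          have h := R4 hC hv; rwa [hUbot] at h⟩
      have hdT : Module.finrank ℝ ↥Tc ≤ ∑ i ∈ Finset.range (n - Module.finrank ℝ ↥Wc), i :=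
        le_trans (Submodule.finrank_mono hkill) (finrank_skew_kill_le Wc)
      have hGa := gauss2 (n - Module.finrank ℝ ↥Wc)
      have hak : (n - Module.finrank ℝ ↥Wc) + Module.finrank ℝ ↥Wc = n := by omega
      have haa : Module.finrank ℝ ↥(perp Wc) = n - Module.finrank ℝ ↥Wc := by omega
      rw [haa] at F1
      exact arith_l0 n (Module.finrank ℝ ↥Wc) (Module.finrank ℝ ↥Uc)
        (n - Module.finrank ℝ ↥Wc) (Module.finrank ℝ ↥Ac) (Module.finrank ℝ ↥Sc)
        (Module.finrank ℝ ↥Tc) (∑ i ∈ Finset.range n, i)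
        (∑ i ∈ Finset.range (n - Module.finrank ℝ ↥Wc), i) hn hl0 hak F1 hdT hGa
        (le_trans hdSSK eSK) eG
    by_cases hkn : Module.finrank ℝ ↥Wc = n
    · have hlnn : Module.finrank ℝ ↥Uc < n := by
        rcases lt_or_eq_of_le e7 with h | h
        · exact h
        · exact absurd ⟨hkn, h⟩ hfull
      exact arith_kn n (Module.finrank ℝ ↥Wc) (Module.finrank ℝ ↥Uc)
        (Module.finrank ℝ ↥(perp Uc)) (Module.finrank ℝ ↥(Uc ⊓ Wc)) (Module.finrank ℝ ↥Ac)
        (Module.finrank ℝ ↥Sc) (Module.finrank ℝ ↥Tc) (∑ i ∈ Finset.range n, i) hn hkn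
        (by omega) hlnn (by omega) F1' (le_trans F2' eSK) (by omega)
        (le_trans hdSSK eSK) eG
    · by_cases hkl : Module.finrank ℝ ↥Wc + Module.finrank ℝ ↥Uc ≤ n
      · exact arith_E1 n (Module.finrank ℝ ↥Wc) (Module.finrank ℝ ↥Uc)
          (Module.finrank ℝ ↥(perp Wc)) (Module.finrank ℝ ↥Ac) (Module.finrank ℝ ↥Sc)
          (Module.finrank ℝ ↥Tc) (∑ i ∈ Finset.range n, i) hn (by omega) (by omega)
          (by omega) hkl (by omega) F1 (le_trans hdSSK eSK) (le_trans hdTSK eSK) eG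
      · exact arith_E2 n (Module.finrank ℝ ↥Wc) (Module.finrank ℝ ↥Uc)
          (Module.finrank ℝ ↥(perp Wc)) (Module.finrank ℝ ↥(perp Uc))
          (Module.finrank ℝ ↥(Uc ⊓ Wc)) (Module.finrank ℝ ↥Ac) (Module.finrank ℝ ↥Sc)
          (Module.finrank ℝ ↥Tc) (∑ i ∈ Finset.range n, i) hn (by omega) (by omega)
          (by omega) e7 (by omega) (by omega) (by omega) (by omega) F1 (le_trans F2 eSK)
          (le_trans F2' eSK) eG
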